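/- Fix K, S, C₀, C₁, D₀, D₁ > 0, α > 2. The critical point M⋆ in equation (19) [M⋆ = K(a₁K + a₂ + √(...))/(1 − a₀K) with a₀ = γ/(S(α−1)), a₁ = (γ/S)(4/(α−2)² + 1/(α−1) + 2/(α−2)), a₂ = (1 + 2/(α−2))γ] is, as a function of γ (on the range where a₀K < 1), strictly increasing in γ. -/

import Mathlib

noncomputable def Aa (S α K γ : ℝ) : ℝ :=
  γ / S * (4 / (α - 2) ^ 2 + 1 / (α - 1) + 2 / (α - 2)) * K + (1 + 2 / (α - 2)) * γ

noncomputable def dd (S α K γ : ℝ) : ℝ := 1 - γ / (S * (α - 1)) * K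

noncomputable def Bb (S α K γ : ℝ) : ℝ :=
  γ / S * (4 / (α - 2) ^ 2 + 1 / (α - 1) + 2 / (α - 2)) * K
    + γ / (S * (α - 1)) * ((1 + 2 / (α - 2)) * γ) * K

noncomputable def Ee (C₀ C₁ D₀ D₁ K : ℝ) : ℝ := (C₀ + C₁ * K) / (D₀ * K + D₁ * K ^ 2)

lemma cc_pos {α : ℝ} (hα : 2 < α) : 0 < 4 / (α - 2) ^ 2 + 1 / (α - 1) + 2 / (α - 2) := by
  have hα1 : (0:ℝ) < α - 1 := by linarith
  have hα2 : (0:ℝ) < α - 2 := by linarith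
  have h1 : (0:ℝ) < 4 / (α - 2) ^ 2 := div_pos (by norm_num) (pow_pos hα2 2)
  have h2 : (0:ℝ) < 1 / (α - 1) := div_pos one_pos hα1
  have h3 : (0:ℝ) < 2 / (α - 2) := div_pos two_pos hα2
  linarith

lemma cc2_pos {α : ℝ} (hα : 2 < α) : 0 < 1 + 2 / (α - 2) := by
  have hα2 : (0:ℝ) < α - 2 := by linarith
  have h3 : (0:ℝ) < 2 / (α - 2) := div_pos two_pos hα2
  linarith

lemma Aa_eq (S α K γ : ℝ) :
    Aa S α K γ = γ * ((4 / (α - 2) ^ 2 + 1 / (α - 1) + 2 / (α - 2)) / S * K + (1 + 2 / (α - 2))) := by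
  unfold Aa; ring

lemma Aa_coef_pos {S α K : ℝ} (hS : 0 < S) (hK : 0 < K) (hα : 2 < α) :
    0 < (4 / (α - 2) ^ 2 + 1 / (α - 1) + 2 / (α - 2)) / S * K + (1 + 2 / (α - 2)) :=
  add_pos (mul_pos (div_pos (cc_pos hα) hS) hK) (cc2_pos hα)

lemma Aa_pos {S α K γ : ℝ} (hS : 0 < S) (hK : 0 < K) (hα : 2 < α) (hγ : 0 < γ) :
    0 < Aa S α K γ := by
  rw [Aa_eq]; exact mul_pos hγ (Aa_coef_pos hS hK hα)

lemma Aa_lt {S α K x y : ℝ} (hS : 0 < S) (hK : 0 < K) (hα : 2 < α) (hxy : x < y) :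
    Aa S α K x < Aa S α K y := by
  rw [Aa_eq, Aa_eq]; exact mul_lt_mul_of_pos_right hxy (Aa_coef_pos hS hK hα)

lemma Bb_eq (S α K γ : ℝ) :
    Bb S α K γ = γ * ((4 / (α - 2) ^ 2 + 1 / (α - 1) + 2 / (α - 2)) / S * K)
      + γ ^ 2 * ((1 + 2 / (α - 2)) * K / (S * (α - 1))) := by
  unfold Bb; ring

lemma Bb_pos {S α K γ : ℝ} (hS : 0 < S) (hK : 0 < K) (hα : 2 < α) (hγ : 0 < γ) :
    0 < Bb S α K γ := by
  have hα1 : (0:ℝ) < α - 1 := by linarith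
  rw [Bb_eq]
  exact add_pos (mul_pos hγ (mul_pos (div_pos (cc_pos hα) hS) hK))
    (mul_pos (pow_pos hγ 2) (div_pos (mul_pos (cc2_pos hα) hK) (mul_pos hS hα1)))

lemma Bb_lt {S α K x y : ℝ} (hS : 0 < S) (hK : 0 < K) (hα : 2 < α) (hx : 0 < x) (hxy : x < y) :
    Bb S α K x < Bb S α K y := by
  have hα1 : (0:ℝ) < α - 1 := by linarith
  have hx2 : x ^ 2 < y ^ 2 := by nlinarith
  rw [Bb_eq, Bb_eq]
  exact add_lt_add (mul_lt_mul_of_pos_right hxy (mul_pos (div_pos (cc_pos hα) hS) hK))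
    (mul_lt_mul_of_pos_right hx2 (div_pos (mul_pos (cc2_pos hα) hK) (mul_pos hS hα1)))

lemma dd_pos {S α K γ : ℝ} (hS : 0 < S) (hK : 0 < K) (hα : 2 < α)
    (hγU : γ < S * (α - 1) / K) : 0 < dd S α K γ := by
  have hα1 : (0:ℝ) < α - 1 := by linarith
  have hSα : 0 < S * (α - 1) := mul_pos hS hα1
  unfold dd
  rw [sub_pos, show γ / (S * (α - 1)) * K = γ * K / (S * (α - 1)) from by ring,
    div_lt_one hSα]
  exact (lt_div_iff₀ hK).mp hγU

lemma dd_lt {S α K x y : ℝ} (hS : 0 < S) (hK : 0 < K) (hα : 2 < α) (hxy : x < y) :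
    dd S α K y < dd S α K x := by
  have hα1 : (0:ℝ) < α - 1 := by linarith
  have hSα : 0 < S * (α - 1) := mul_pos hS hα1
  unfold dd
  have h : x / (S * (α - 1)) * K < y / (S * (α - 1)) * K :=
    mul_lt_mul_of_pos_right ((div_lt_div_iff_of_pos_right hSα).mpr hxy) hK
  linarith

lemma Ee_pos {C₀ C₁ D₀ D₁ K : ℝ} (hC₀ : 0 < C₀) (hC₁ : 0 < C₁) (hD₀ : 0 < D₀)
    (hD₁ : 0 < D₁) (hK : 0 < K) : 0 < Ee C₀ C₁ D₀ D₁ K := by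
  unfold Ee; positivity

lemma Mkey (K S C₀ C₁ D₀ D₁ α γ : ℝ) (hK : 0 < K) (hS : 0 < S)
    (hC₀ : 0 < C₀) (hC₁ : 0 < C₁) (hD₀ : 0 < D₀) (hD₁ : 0 < D₁) (hα : 2 < α)
    (hγ : 0 < γ) (hγU : γ < S * (α - 1) / K) :
    K * ((γ / S) * (4 / (α - 2) ^ 2 + 1 / (α - 1) + 2 / (α - 2)) * K + (1 + 2 / (α - 2)) * γ
      + Real.sqrt ((γ / S) * (4 / (α - 2) ^ 2 + 1 / (α - 1) + 2 / (α - 2)) * ((1 + 2 / (α - 2)) * γ) * K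
          + ((γ / S) * (4 / (α - 2) ^ 2 + 1 / (α - 1) + 2 / (α - 2))) ^ 2 * K ^ 2
          + (1 - γ / (S * (α - 1)) * K) * ((γ / S) * (4 / (α - 2) ^ 2 + 1 / (α - 1) + 2 / (α - 2)) * K
              + γ / (S * (α - 1)) * ((1 + 2 / (α - 2)) * γ) * K) * (C₀ + C₁ * K) / (D₀ * K + D₁ * K ^ 2)
          + γ / (S * (α - 1)) * ((γ / S) * (4 / (α - 2) ^ 2 + 1 / (α - 1) + 2 / (α - 2))) * ((1 + 2 / (α - 2)) * γ) * K ^ 2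
          + γ / (S * (α - 1)) * ((1 + 2 / (α - 2)) * γ) ^ 2 * K)) / (1 - γ / (S * (α - 1)) * K)
    = K * Aa S α K γ / dd S α K γ
      + K * Real.sqrt (Bb S α K γ * (Aa S α K γ + dd S α K γ * Ee C₀ C₁ D₀ D₁ K) / (dd S α K γ) ^ 2) := by
  have hα1 : (0:ℝ) < α - 1 := by linarith
  have hα2 : (0:ℝ) < α - 2 := by linarith
  have hd : 0 < dd S α K γ := dd_pos hS hK hα hγU
  have hA := Aa_pos (γ := γ) hS hK hα hγ
  have hB := Bb_pos (γ := γ) hS hK hα hγ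
  have hE := Ee_pos hC₀ hC₁ hD₀ hD₁ hK
  have hT0 : 0 ≤ Bb S α K γ * (Aa S α K γ + dd S α K γ * Ee C₀ C₁ D₀ D₁ K) / (dd S α K γ) ^ 2 :=
    le_of_lt (div_pos (mul_pos hB (add_pos hA (mul_pos hd hE))) (pow_pos hd 2))
  have harg : (γ / S) * (4 / (α - 2) ^ 2 + 1 / (α - 1) + 2 / (α - 2)) * ((1 + 2 / (α - 2)) * γ) * K
          + ((γ / S) * (4 / (α - 2) ^ 2 + 1 / (α - 1) + 2 / (α - 2))) ^ 2 * K ^ 2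
          + (1 - γ / (S * (α - 1)) * K) * ((γ / S) * (4 / (α - 2) ^ 2 + 1 / (α - 1) + 2 / (α - 2)) * K
              + γ / (S * (α - 1)) * ((1 + 2 / (α - 2)) * γ) * K) * (C₀ + C₁ * K) / (D₀ * K + D₁ * K ^ 2)
          + γ / (S * (α - 1)) * ((γ / S) * (4 / (α - 2) ^ 2 + 1 / (α - 1) + 2 / (α - 2))) * ((1 + 2 / (α - 2)) * γ) * K ^ 2
          + γ / (S * (α - 1)) * ((1 + 2 / (α - 2)) * γ) ^ 2 * K
      = Bb S α K γ * (Aa S α K γ + dd S α K γ * Ee C₀ C₁ D₀ D₁ K) := by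
    unfold Aa Bb dd Ee; ring
  have hs : Real.sqrt (Bb S α K γ * (Aa S α K γ + dd S α K γ * Ee C₀ C₁ D₀ D₁ K))
      = Real.sqrt (Bb S α K γ * (Aa S α K γ + dd S α K γ * Ee C₀ C₁ D₀ D₁ K) / (dd S α K γ) ^ 2)
        * dd S α K γ := by
    conv_lhs => rw [← div_mul_cancel₀ (Bb S α K γ * (Aa S α K γ + dd S α K γ * Ee C₀ C₁ D₀ D₁ K))
      (pow_ne_zero 2 hd.ne')]
    rw [Real.sqrt_mul hT0, Real.sqrt_sq hd.le]
  rw [harg, hs,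
    show (γ / S) * (4 / (α - 2) ^ 2 + 1 / (α - 1) + 2 / (α - 2)) * K + (1 + 2 / (α - 2)) * γ
      = Aa S α K γ from rfl,
    show (1 - γ / (S * (α - 1)) * K) = dd S α K γ from rfl]
  field_simp

/-- The EE-optimal number of antennas M⋆ of eq. (19) is strictly increasing
in the SINR target γ (on the range where a₀K < 1, i.e. γ < S(α−1)/K). -/
theorem M_star_strictMono_in_gamma
    (K S C₀ C₁ D₀ D₁ α : ℝ) (hK : 0 < K) (hS : 0 < S)
    (hC₀ : 0 < C₀) (hC₁ : 0 < C₁) (hD₀ : 0 < D₀) (hD₁ : 0 < D₁) (hα : 2 < α) :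
    StrictMonoOn (fun γ : ℝ =>
      let a₀ := γ / (S * (α - 1))
      let a₁ := (γ / S) * (4 / (α - 2) ^ 2 + 1 / (α - 1) + 2 / (α - 2))
      let a₂ := (1 + 2 / (α - 2)) * γ
      K * (a₁ * K + a₂
        + Real.sqrt (a₁ * a₂ * K + a₁ ^ 2 * K ^ 2
          + (1 - a₀ * K) * (a₁ * K + a₀ * a₂ * K) * (C₀ + C₁ * K) / (D₀ * K + D₁ * K ^ 2)
          + a₀ * a₁ * a₂ * K ^ 2 + a₀ * a₂ ^ 2 * K)) / (1 - a₀ * K))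
      (Set.Ioo 0 (S * (α - 1) / K)) := by
  intro x hx y hy hxy
  obtain ⟨hx0, hxU⟩ := hx
  obtain ⟨hy0, hyU⟩ := hy
  dsimp only
  rw [Mkey K S C₀ C₁ D₀ D₁ α x hK hS hC₀ hC₁ hD₀ hD₁ hα hx0 hxU,
      Mkey K S C₀ C₁ D₀ D₁ α y hK hS hC₀ hC₁ hD₀ hD₁ hα hy0 hyU]
  have hE := Ee_pos hC₀ hC₁ hD₀ hD₁ hK
  have hAx := Aa_pos (γ := x) hS hK hα hx0
  have hAy := Aa_pos (γ := y) hS hK hα hy0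
  have hBx := Bb_pos (γ := x) hS hK hα hx0
  have hBy := Bb_pos (γ := y) hS hK hα hy0
  have hdx := dd_pos hS hK hα hxU
  have hdy := dd_pos hS hK hα hyU
  have hAxy := Aa_lt (S := S) (α := α) (K := K) hS hK hα hxy
  have hBxy := Bb_lt (S := S) (α := α) (K := K) hS hK hα hx0 hxy
  have hdyx := dd_lt (S := S) (α := α) (K := K) hS hK hα hxy
  -- first summand
  have h1 : K * Aa S α K x / dd S α K x < K * Aa S α K y / dd S α K y := by
    rw [div_lt_div_iff₀ hdx hdy]
    have := mul_lt_mul'' hAxy hdyx hAx.le hdy.le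
    nlinarith
  -- sqrt argument comparison
  have hTx : 0 < Bb S α K x * (Aa S α K x + dd S α K x * Ee C₀ C₁ D₀ D₁ K) / (dd S α K x) ^ 2 :=
    div_pos (mul_pos hBx (add_pos hAx (mul_pos hdx hE))) (pow_pos hdx 2)
  have hTlt : Bb S α K x * (Aa S α K x + dd S α K x * Ee C₀ C₁ D₀ D₁ K) / (dd S α K x) ^ 2
      < Bb S α K y * (Aa S α K y + dd S α K y * Ee C₀ C₁ D₀ D₁ K) / (dd S α K y) ^ 2 := by
    rw [div_lt_div_iff₀ (pow_pos hdx 2) (pow_pos hdy 2)]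
    have hsq : (dd S α K y) ^ 2 < (dd S α K x) ^ 2 := by nlinarith
    have t1 : Bb S α K x * Aa S α K x * (dd S α K y) ^ 2
        < Bb S α K y * Aa S α K y * (dd S α K x) ^ 2 :=
      mul_lt_mul'' (mul_lt_mul'' hBxy hAxy hBx.le hAx.le) hsq
        (mul_pos hBx hAx).le (sq_nonneg _)
    have t2 : Bb S α K x * dd S α K y < Bb S α K y * dd S α K x :=
      mul_lt_mul'' hBxy hdyx hBx.le hdy.le
    have t3 := mul_lt_mul_of_pos_right t2
      (mul_pos (mul_pos hdx hdy) hE)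
    nlinarith [t1, t3]
  have h2 : Real.sqrt (Bb S α K x * (Aa S α K x + dd S α K x * Ee C₀ C₁ D₀ D₁ K) / (dd S α K x) ^ 2)
      < Real.sqrt (Bb S α K y * (Aa S α K y + dd S α K y * Ee C₀ C₁ D₀ D₁ K) / (dd S α K y) ^ 2) :=
    Real.sqrt_lt_sqrt hTx.le hTlt
  exact add_lt_add h1 (mul_lt_mul_of_pos_left h2 hK)
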